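/- Let $k \geq 2$ and $t \in (0,1)$. Define $D(k,t) = H(\gamma^*_t) - 2H(x^*_t)$, where $H(v) = -\sum_i v_i \log v_i$ is the Shannon entropy, $\gamma^*_t \in \Delta_{k^2}$ is the vector with one entry $t + (1-t)/k^2$ and $k^2 - 1$ entries $(1-t)/k^2$, and $x^*_t \in \Delta_k$ has one entry $a = \varphi(1/k,t) = (\sqrt{(1-t)/k} + \sqrt{t(1 - 1/k)})^2$ and $k-1$ entries $(1-a)/(k-1)$. Then for fixed $t \in (0,1)$, $D(k,t) \to t\log t + (1-t)\log(1-t)$ as $k \to \infty$. -/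

import Mathlib

open Filter Real

private lemma aux_log_div_sqrt : Tendsto (fun x : ℝ => Real.log x / Real.sqrt x) atTop (nhds 0) := by
  have h := (isLittleO_log_rpow_atTop (by norm_num : (0:ℝ) < 1/2)).tendsto_div_nhds_zero
  refine h.congr ?_
  intro x
  rw [Real.sqrt_eq_rpow]

private lemma aux_mul_log {f : ℝ → ℝ} {c : ℝ} (hc : c ≠ 0) (hf : Tendsto f atTop (nhds c)) :
    Tendsto (fun x => f x * Real.log (f x)) atTop (nhds (c * Real.log c)) :=
  (ContinuousAt.mul continuousAt_id (Real.continuousAt_log hc)).tendsto.comp hf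

noncomputable def φa (t x : ℝ) : ℝ :=
  (Real.sqrt ((1 - t) / x) + Real.sqrt (t * (1 - 1 / x))) ^ 2

private lemma real_main (t : ℝ) (ht : t ∈ Set.Ioo (0 : ℝ) 1) :
    Tendsto (fun x : ℝ =>
      (-((t + (1 - t) / x ^ 2) * Real.log (t + (1 - t) / x ^ 2)
          + (x ^ 2 - 1) * ((1 - t) / x ^ 2) * Real.log ((1 - t) / x ^ 2)))
      - 2 * (-(φa t x * Real.log (φa t x)
            + (x - 1) * ((1 - φa t x) / (x - 1)) * Real.log ((1 - φa t x) / (x - 1)))))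
      atTop (nhds (t * Real.log t + (1 - t) * Real.log (1 - t))) := by
  obtain ⟨ht0, ht1⟩ := ht
  have ht1' : (0:ℝ) < 1 - t := by linarith
  -- basic limits
  have hinv : Tendsto (fun x : ℝ => 1 / x) atTop (nhds 0) := by
    simpa [one_div] using tendsto_inv_atTop_zero
  have hinv2 : Tendsto (fun x : ℝ => 1 / x ^ 2) atTop (nhds 0) := by
    have := hinv.pow 2
    simpa [div_pow] using this
  have hinvm1 : Tendsto (fun x : ℝ => 1 / (x - 1)) atTop (nhds 0) := by
    have : Tendsto (fun x : ℝ => x - 1) atTop atTop :=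
      tendsto_atTop_add_const_right atTop (-1) tendsto_id
    have h2 := tendsto_inv_atTop_zero.comp this
    simpa [Function.comp_def, one_div] using h2
  -- limit of φa
  have ha : Tendsto (fun x : ℝ => φa t x) atTop (nhds t) := by
    have hc : Continuous (fun u : ℝ => (Real.sqrt ((1 - t) * u) + Real.sqrt (t * (1 - u))) ^ 2) := by
      fun_prop
    have h0 := (hc.tendsto 0).comp hinv
    have hval : (Real.sqrt ((1 - t) * 0) + Real.sqrt (t * (1 - 0))) ^ 2 = t := by
      simp [Real.sq_sqrt ht0.le]
    rw [hval] at h0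
    refine h0.congr fun x => ?_
    simp only [Function.comp, φa, mul_one_div]
  -- the individual limits
  have hG1 : Tendsto (fun x : ℝ => -((t + (1 - t) / x ^ 2) * Real.log (t + (1 - t) / x ^ 2)))
      atTop (nhds (-(t * Real.log t))) := by
    have hf : Tendsto (fun x : ℝ => t + (1 - t) / x ^ 2) atTop (nhds t) := by
      have := (hinv2.const_mul (1 - t)).const_add t
      simpa [div_eq_mul_inv] using this
    exact (aux_mul_log ht0.ne' hf).neg
  have hG2 : Tendsto (fun x : ℝ => -((1 - 1 / x ^ 2) * ((1 - t) * Real.log (1 - t))))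
      atTop (nhds (-((1 - t) * Real.log (1 - t)))) := by
    have := ((hinv2.const_sub 1).mul_const ((1 - t) * Real.log (1 - t))).neg
    simpa using this
  have hq : Tendsto (fun x : ℝ => x / (x - 1)) atTop (nhds 1) := by
    have h1 : Tendsto (fun x : ℝ => 1 + 1 / (x - 1)) atTop (nhds 1) := by
      simpa using hinvm1.const_add 1
    refine h1.congr' ?_
    filter_upwards [eventually_ge_atTop (2:ℝ)] with x hx
    have hx1 : x - 1 ≠ 0 := by nlinarith
    field_simp
    ring
  have hG3 : Tendsto (fun x : ℝ => 2 * (1 - t) * Real.log (x / (x - 1))) atTop (nhds 0) := by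
    have hlog := (Real.continuousAt_log one_ne_zero).tendsto.comp hq
    rw [Real.log_one] at hlog
    simpa using hlog.const_mul (2 * (1 - t))
  have hz2 : Tendsto (fun x : ℝ => Real.log x / x ^ 2) atTop (nhds 0) := by
    refine squeeze_zero' ?_ ?_ aux_log_div_sqrt
    · filter_upwards [eventually_ge_atTop (1:ℝ)] with x hx
      have := Real.log_nonneg hx
      positivity
    · filter_upwards [eventually_ge_atTop (1:ℝ)] with x hx
      have h1 : Real.sqrt x ≤ x ^ 2 := by
        have hxx : x ≤ x ^ 2 := by nlinarith
        have hxx2 : x ^ 2 ≤ (x ^ 2) ^ 2 := by nlinarith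
        exact (Real.sqrt_le_left (by positivity)).mpr (by linarith)
      have h2 : (0:ℝ) < Real.sqrt x := Real.sqrt_pos.mpr (by linarith)
      exact div_le_div_of_nonneg_left (Real.log_nonneg hx) h2 h1
  have hz1 : Tendsto (fun x : ℝ => Real.log (x - 1) / x) atTop (nhds 0) := by
    refine squeeze_zero' ?_ ?_ aux_log_div_sqrt
    · filter_upwards [eventually_ge_atTop (2:ℝ)] with x hx
      have h0 : (0:ℝ) ≤ Real.log (x - 1) := Real.log_nonneg (by linarith)
      positivity
    · filter_upwards [eventually_ge_atTop (2:ℝ)] with x hx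
      have h0 : (0:ℝ) ≤ Real.log (x - 1) := Real.log_nonneg (by linarith)
      have h2 : (0:ℝ) < Real.sqrt x := Real.sqrt_pos.mpr (by linarith)
      have h3 : Real.sqrt x ≤ x := (Real.sqrt_le_left (by linarith)).mpr (by nlinarith)
      have h4 : Real.log (x - 1) ≤ Real.log x := Real.log_le_log (by linarith) (by linarith)
      exact div_le_div₀ (le_trans h0 h4) h4 h2 h3
  have hzs : Tendsto (fun x : ℝ => Real.log (x - 1) / Real.sqrt x) atTop (nhds 0) := by
    refine squeeze_zero' ?_ ?_ aux_log_div_sqrt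
    · filter_upwards [eventually_ge_atTop (2:ℝ)] with x hx
      have h0 : (0:ℝ) ≤ Real.log (x - 1) := Real.log_nonneg (by linarith)
      positivity
    · filter_upwards [eventually_ge_atTop (2:ℝ)] with x hx
      have h2 : (0:ℝ) < Real.sqrt x := Real.sqrt_pos.mpr (by linarith)
      have h4 : Real.log (x - 1) ≤ Real.log x := Real.log_le_log (by linarith) (by linarith)
      gcongr
  have hG4 : Tendsto (fun x : ℝ => -(2 * (1 - t)) * (Real.log x / x ^ 2)) atTop (nhds 0) := by
    simpa using hz2.const_mul (-(2 * (1 - t)))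
  have hG5 : Tendsto (fun x : ℝ => 2 * (1 - 2 * t) * (Real.log (x - 1) / x)) atTop (nhds 0) := by
    simpa using hz1.const_mul (2 * (1 - 2 * t))
  have hG6 : Tendsto (fun x : ℝ => 4 * Real.sqrt ((1 - t) * t * (1 - 1 / x)) *
      (Real.log (x - 1) / Real.sqrt x)) atTop (nhds 0) := by
    have hc : Continuous (fun u : ℝ => 4 * Real.sqrt ((1 - t) * t * (1 - u))) := by fun_prop
    have h0 := (hc.tendsto 0).comp hinv
    have := h0.mul hzs
    simpa using this
  have hG7 : Tendsto (fun x : ℝ => 2 * (φa t x * Real.log (φa t x)))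
      atTop (nhds (2 * (t * Real.log t))) :=
    (aux_mul_log ht0.ne' ha).const_mul 2
  have hG8 : Tendsto (fun x : ℝ => 2 * ((1 - φa t x) * Real.log (1 - φa t x)))
      atTop (nhds (2 * ((1 - t) * Real.log (1 - t)))) := by
    have hf : Tendsto (fun x : ℝ => 1 - φa t x) atTop (nhds (1 - t)) := ha.const_sub 1
    exact (aux_mul_log ht1'.ne' hf).const_mul 2
  have hsum := ((((((hG1.add hG2).add hG3).add hG4).add hG5).add hG6).add hG7).add hG8
  refine Tendsto.congr' ?_ (by convert hsum using 2; ring)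
  -- eventual equality of the decomposition with the original expression
  filter_upwards [eventually_ge_atTop (2:ℝ),
    ha.eventually_lt_const ht1] with x hx2 hxa
  have hx0 : (0:ℝ) < x := by linarith
  have hx1 : (0:ℝ) < x - 1 := by linarith
  have h1x : (0:ℝ) ≤ 1 - 1 / x := by
    have : 1 / x ≤ 1 / 2 := by
      apply one_div_le_one_div_of_le <;> linarith
    linarith
  have hsx : (0:ℝ) < Real.sqrt x := Real.sqrt_pos.mpr hx0
  have h1a : (0:ℝ) < 1 - φa t x := by linarith
  have hAa : φa t x = (1 - t) / x + t * (1 - 1 / x)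
      + 2 * (Real.sqrt ((1 - t) * t * (1 - 1 / x)) / Real.sqrt x) := by
    rw [φa, add_sq, Real.sq_sqrt (by positivity), Real.sq_sqrt (by positivity)]
    have hprod : Real.sqrt ((1 - t) / x) * Real.sqrt (t * (1 - 1 / x))
        = Real.sqrt ((1 - t) * t * (1 - 1 / x)) / Real.sqrt x := by
      rw [← Real.sqrt_mul (by positivity), ← Real.sqrt_div (by positivity)]
      congr 1
      field_simp
    rw [mul_assoc, hprod]; ring
  have e1 : Real.log ((1 - t) / x ^ 2) = Real.log (1 - t) - 2 * Real.log x := by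
    rw [Real.log_div ht1'.ne' (by positivity), Real.log_pow]
    push_cast; ring
  have e2 : Real.log ((1 - φa t x) / (x - 1))
      = Real.log (1 - φa t x) - Real.log (x - 1) :=
    Real.log_div h1a.ne' hx1.ne'
  have e3 : Real.log (x / (x - 1)) = Real.log x - Real.log (x - 1) :=
    Real.log_div hx0.ne' hx1.ne'
  rw [e1, e2, e3, hAa]
  field_simp
  ring

theorem stmt_19 (t : ℝ) (ht : t ∈ Set.Ioo (0 : ℝ) 1) :
    Tendsto (fun k : ℕ =>
      -- H(γ*_t) for output dimension k
      (-((t + (1 - t) / (k : ℝ) ^ 2) * Real.log (t + (1 - t) / (k : ℝ) ^ 2)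
          + ((k : ℝ) ^ 2 - 1) * ((1 - t) / (k : ℝ) ^ 2) * Real.log ((1 - t) / (k : ℝ) ^ 2)))
      -- minus 2 H(x*_t)
      - 2 * (-((Real.sqrt ((1 - t) / (k : ℝ)) + Real.sqrt (t * (1 - 1 / (k : ℝ)))) ^ 2
              * Real.log ((Real.sqrt ((1 - t) / (k : ℝ)) + Real.sqrt (t * (1 - 1 / (k : ℝ)))) ^ 2)
            + ((k : ℝ) - 1)
              * ((1 - (Real.sqrt ((1 - t) / (k : ℝ)) + Real.sqrt (t * (1 - 1 / (k : ℝ)))) ^ 2) / ((k : ℝ) - 1))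
              * Real.log ((1 - (Real.sqrt ((1 - t) / (k : ℝ)) + Real.sqrt (t * (1 - 1 / (k : ℝ)))) ^ 2) / ((k : ℝ) - 1)))))
      atTop (nhds (t * Real.log t + (1 - t) * Real.log (1 - t))) := by
  exact (real_main t ht).comp tendsto_natCast_atTop_atTop
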